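/- arXiv:1106.2735 — 2 statements merged into one kernel-verified Lean document; each statement's English description precedes it below -/
import Mathlib

section
/- The Grothendieck constant of the circuit C_n of length n >= 3 equals (n/(n-2))·cos(pi/n). -/
open Finset Real
open scoped Classical Pointwise

noncomputable section

variable {V : Type*} [Fintype V] [LinearOrder V]

/-- Sum over the edges of `G` (pairs `i < j` with `G.Adj i j`) of `w i j * x i j`. -/
def edgeSum (G : SimpleGraph V) (w : V → V → ℝ) (x : V → V → ℝ) : ℝ :=
  ∑ i, ∑ j, if i < j ∧ G.Adj i j then w i j * x i j else 0

/-- `ip(G,w)`: maximum of `∑_{ij ∈ E} w_ij x_i x_j` over `x ∈ {±1}^V`. -/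
def ipVal (G : SimpleGraph V) (w : V → V → ℝ) : ℝ :=
  sSup {t | ∃ x : V → ℝ, (∀ i, x i = 1 ∨ x i = -1) ∧
    t = edgeSum G w (fun i j => x i * x j)}

/-- `sdp(G,w)`: maximum of `∑_{ij ∈ E} w_ij ⟪u_i,u_j⟫` over unit vectors. -/
def sdpVal (G : SimpleGraph V) (w : V → V → ℝ) : ℝ :=
  sSup {t | ∃ u : V → EuclideanSpace ℝ V, (∀ i, ‖u i‖ = 1) ∧
    t = edgeSum G w (fun i j => (inner ℝ (u i) (u j) : ℝ))}

/-- The Grothendieck constant `κ(G) = sup_w sdp(G,w)/ip(G,w)`. -/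
def kappaVal (G : SimpleGraph V) : ℝ :=
  sSup {t | ∃ w : V → V → ℝ, t = sdpVal G w / ipVal G w}

/-- The elliptope: PSD matrices with unit diagonal. -/
def elliptope (V : Type*) [Fintype V] : Set (Matrix V V ℝ) :=
  {X | X.PosSemidef ∧ ∀ i, X i i = 1}

/-- The cut polytope: convex hull of rank-one ±1 correlation matrices. -/
def cutPolytope (V : Type*) [Fintype V] : Set (Matrix V V ℝ) :=
  convexHull ℝ {X | ∃ x : V → ℝ, (∀ i, x i = 1 ∨ x i = -1) ∧
    X = Matrix.of fun i j => x i * x j}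

/-- Projection of a matrix onto the edge set of `G`. -/
def projE (G : SimpleGraph V) (X : Matrix V V ℝ) : V → V → ℝ :=
  fun i j => if G.Adj i j then X i j else 0

/-- `𝓔(G)`: projection of the elliptope onto the edge set of `G`. -/
def ellG (G : SimpleGraph V) : Set (V → V → ℝ) := projE G '' elliptope V

/-- `CUT(G)`: projection of the cut polytope onto the edge set of `G`. -/
def cutG (G : SimpleGraph V) : Set (V → V → ℝ) := projE G '' cutPolytope V

end
/-- The cycle graph `C_n` on `Fin n`, with edges `(i, i+1 mod n)`. -/
def cycleGraph (n : ℕ) : SimpleGraph (Fin n) :=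
  SimpleGraph.fromRel (fun i j => j.val = (i.val + 1) % n)



/-- arccos is antitone. -/
lemma my_arccos_le_arccos {x y : ℝ} (h : x ≤ y) : Real.arccos y ≤ Real.arccos x := by
  unfold Real.arccos
  have := Real.monotone_arcsin h
  linarith

/-- Tangent line bound for cos at t, valid on [0, π] when the endpoint condition H holds. -/
lemma tangent_cos (t : ℝ) (ht0 : 0 < t) (ht : t ≤ π / 4)
    (hH : 0 ≤ 1 + Real.cos t - Real.sin t * (π - t))
    (α : ℝ) (hα0 : 0 ≤ α) (hαπ : α ≤ π) :
    Real.cos α ≤ Real.cos t - Real.sin t * (α - t) := by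
  have hpi := Real.pi_gt_d2
  have htpi2 : t ≤ π / 2 := by linarith
  set g : ℝ → ℝ := fun x => Real.cos t - Real.sin t * (x - t) - Real.cos x with hg
  have hderiv : ∀ x : ℝ, HasDerivAt g (Real.sin x - Real.sin t) x := by
    intro x
    have h1 : HasDerivAt (fun x : ℝ => Real.cos t - Real.sin t * (x - t)) (-Real.sin t) x := by
      have := ((hasDerivAt_id x).sub_const t).const_mul (Real.sin t)
      have h2 := (this.const_sub (Real.cos t))
      simpa using h2
    have h3 := h1.sub (Real.hasDerivAt_cos x)
    refine h3.congr_deriv ?_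
    ring
  have hcont : Continuous g := by
    have : Continuous fun x : ℝ => Real.cos t - Real.sin t * (x - t) - Real.cos x := by
      continuity
    simpa [hg] using this
  have hdiff : Differentiable ℝ g := fun x => (hderiv x).differentiableAt
  -- g t = 0
  have hgt : g t = 0 := by simp [hg]
  have goal : 0 ≤ g α := by
    rcases le_total α t with hc | hc
    · -- antitone on [0, t]
      have hanti : AntitoneOn g (Set.Icc 0 t) := by
        apply antitoneOn_of_deriv_nonpos (convex_Icc 0 t) hcont.continuousOn
          hdiff.differentiableOn
        intro x hx
        rw [interior_Icc] at hx
        rw [(hderiv x).deriv]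
        have : Real.sin x ≤ Real.sin t := by
          apply Real.sin_le_sin_of_le_of_le_pi_div_two (by linarith [hx.1]) htpi2 hx.2.le
        linarith
      have := hanti ⟨hα0, hc⟩ ⟨ht0.le, le_refl t⟩ hc
      rw [hgt] at this; linarith
    · rcases le_total α (π - t) with hc2 | hc2
      · have hmono : MonotoneOn g (Set.Icc t (π - t)) := by
          apply monotoneOn_of_deriv_nonneg (convex_Icc _ _) hcont.continuousOn
            hdiff.differentiableOn
          intro x hx
          rw [interior_Icc] at hx
          rw [(hderiv x).deriv]
          have hsin : Real.sin t ≤ Real.sin x := by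
            rcases le_total x (π / 2) with h | h
            · exact Real.sin_le_sin_of_le_of_le_pi_div_two (by linarith) h hx.1.le
            · have : Real.sin x = Real.sin (π - x) := (Real.sin_pi_sub x).symm
              rw [this]
              exact Real.sin_le_sin_of_le_of_le_pi_div_two (by linarith) (by linarith)
                (by linarith [hx.2])
          linarith
        have := hmono ⟨le_refl t, by linarith⟩ ⟨hc, hc2⟩ hc
        rw [hgt] at this; linarith
      · have hanti : AntitoneOn g (Set.Icc (π - t) π) := by
          apply antitoneOn_of_deriv_nonpos (convex_Icc _ _) hcont.continuousOn
            hdiff.differentiableOn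
          intro x hx
          rw [interior_Icc] at hx
          rw [(hderiv x).deriv]
          have : Real.sin x ≤ Real.sin t := by
            have hsx : Real.sin x = Real.sin (π - x) := (Real.sin_pi_sub x).symm
            rw [hsx]
            apply Real.sin_le_sin_of_le_of_le_pi_div_two (by linarith [hx.2]) htpi2
              (by linarith [hx.1])
          linarith
        have := hanti ⟨hc2, hαπ⟩ ⟨by linarith, le_refl π⟩ hαπ
        have hgπ : g π = Real.cos t - Real.sin t * (π - t) + 1 := by
          simp only [hg, Real.cos_pi]
          ring
        rw [hgπ] at this
        linarith
  simp only [hg] at goal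
  linarith

lemma aux_H (n : ℕ) (hn : 4 ≤ n) :
    0 ≤ 1 + Real.cos (π / n) - Real.sin (π / n) * (π - π / n) := by
  have hpi := Real.pi_gt_d2
  have hpi' := Real.pi_lt_d2
  have hn0 : (0:ℝ) < n := by positivity
  have ht0 : 0 < π / n := by positivity
  rcases eq_or_lt_of_le hn with h4 | h5
  · -- n = 4
    subst h4
    push_cast
    rw [show π / (4:ℝ) = π / 4 by norm_num, Real.cos_pi_div_four, Real.sin_pi_div_four]
    have hs2 : Real.sqrt 2 ^ 2 = 2 := Real.sq_sqrt (by norm_num)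
    have hs2' : (0:ℝ) ≤ Real.sqrt 2 := Real.sqrt_nonneg 2
    nlinarith [sq_nonneg (Real.sqrt 2 - 1.415)]
  · -- n ≥ 5
    have hn5 : (5:ℝ) ≤ n := by exact_mod_cast h5
    have ht5 : π / n ≤ π / 5 := by
      apply div_le_div_of_nonneg_left Real.pi_pos.le (by norm_num) hn5
    set t := π / n with hts
    have h1 : Real.sin t ≤ t := Real.sin_le ht0.le
    have h2 : 1 - t ^ 2 / 2 ≤ Real.cos t := Real.one_sub_sq_div_two_le_cos
    have h3 : Real.sin t * (π - t) ≤ t * (π - t) := by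
      apply mul_le_mul_of_nonneg_right h1 (by nlinarith)
    nlinarith [sq_nonneg t]

lemma aux_sum3 (a b c : ℝ) (ha : 0 ≤ a) (ha' : a ≤ π) (hb : 0 ≤ b) (hb' : b ≤ π)
    (hc : 0 ≤ c) (hc' : c ≤ π) (hsum : π ≤ a + b + c) :
    Real.cos a + Real.cos b + Real.cos c ≤ 3 / 2 := by
  have hab : Real.cos a + Real.cos b
      = 2 * Real.cos ((a + b) / 2) * Real.cos ((a - b) / 2) := Real.cos_add_cos a b
  have hv1 : Real.cos ((a - b) / 2) ≤ 1 := Real.cos_le_one _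
  have hv0 : 0 ≤ Real.cos ((a - b) / 2) :=
    Real.cos_nonneg_of_mem_Icc ⟨by linarith, by linarith⟩
  rcases le_total (a + b) π with h | h
  · -- cos c ≤ -cos(a+b)
    have h1 : Real.cos c ≤ Real.cos (π - (a + b)) := by
      apply Real.cos_le_cos_of_nonneg_of_le_pi (by linarith) hc' (by linarith)
    rw [Real.cos_pi_sub] at h1
    have hu0 : 0 ≤ Real.cos ((a + b) / 2) :=
      Real.cos_nonneg_of_mem_Icc ⟨by linarith, by linarith⟩
    have hsq : Real.cos (a + b) = 2 * Real.cos ((a + b) / 2) ^ 2 - 1 := by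
      have h := Real.cos_sq ((a + b) / 2)
      rw [show 2 * ((a+b)/2) = a + b by ring] at h
      linarith
    nlinarith [sq_nonneg (2 * Real.cos ((a + b) / 2) - 1),
      mul_le_mul_of_nonneg_left hv1 (mul_nonneg (by norm_num : (0:ℝ) ≤ 2) hu0)]
  · -- a + b > π : cos a + cos b ≤ 0
    have hu : Real.cos ((a + b) / 2) ≤ 0 :=
      Real.cos_nonpos_of_pi_div_two_le_of_le (by linarith) (by linarith)
    have : Real.cos a + Real.cos b ≤ 0 := by
      rw [hab]
      apply mul_nonpos_of_nonpos_of_nonneg _ hv0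
      nlinarith
    nlinarith [Real.cos_le_one c]

/-- Main scalar lemma: angles in [0,π] summing to at least π. -/
lemma aux_B (n : ℕ) (hn : 3 ≤ n) (α : ℕ → ℝ)
    (h0 : ∀ i < n, 0 ≤ α i ∧ α i ≤ π)
    (hsum : π ≤ ∑ i ∈ Finset.range n, α i) :
    ∑ i ∈ Finset.range n, Real.cos (α i) ≤ n * Real.cos (π / n) := by
  rcases eq_or_lt_of_le hn with h3 | h4
  · -- n = 3
    subst h3
    have e0 := h0 0 (by norm_num)
    have e1 := h0 1 (by norm_num)
    have e2 := h0 2 (by norm_num)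
    rw [Finset.sum_range_succ, Finset.sum_range_succ, Finset.sum_range_one] at hsum ⊢
    rw [show ((3:ℕ):ℝ) = 3 by norm_num, show π / (3:ℝ) = π / 3 by norm_num,
      Real.cos_pi_div_three]
    have := aux_sum3 (α 0) (α 1) (α 2) e0.1 e0.2 e1.1 e1.2 e2.1 e2.2 (by linarith)
    linarith
  · have hn4 : 4 ≤ n := h4
    have hn0 : (0:ℝ) < n := by positivity
    set t := π / n with hts
    have ht0 : 0 < t := by positivity
    have ht4 : t ≤ π / 4 := by
      rw [hts]
      apply div_le_div_of_nonneg_left Real.pi_pos.le (by norm_num)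
      exact_mod_cast hn4
    have hH := aux_H n hn4
    have hnt : (n:ℝ) * t = π := by rw [hts]; field_simp
    have hsin : 0 ≤ Real.sin t := Real.sin_nonneg_of_nonneg_of_le_pi ht0.le
      (by nlinarith [Real.pi_gt_d2])
    have step : ∑ i ∈ Finset.range n, Real.cos (α i)
        ≤ ∑ i ∈ Finset.range n, (Real.cos t - Real.sin t * (α i - t)) := by
      apply Finset.sum_le_sum
      intro i hi
      have hb := h0 i (Finset.mem_range.mp hi)
      exact tangent_cos t ht0 ht4 hH (α i) hb.1 hb.2
    have hsplit : ∑ i ∈ Finset.range n, (Real.cos t - Real.sin t * (α i - t))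
        = n * Real.cos t - Real.sin t * ((∑ i ∈ Finset.range n, α i) - n * t) := by
      rw [Finset.sum_sub_distrib, Finset.sum_const, Finset.card_range, nsmul_eq_mul,
        ← Finset.mul_sum]
      congr 2
      rw [Finset.sum_sub_distrib, Finset.sum_const, Finset.card_range, nsmul_eq_mul]
    rw [hsplit] at step
    have : 0 ≤ Real.sin t * ((∑ i ∈ Finset.range n, α i) - n * t) := by
      apply mul_nonneg hsin
      rw [hnt]
      linarith
    linarith

lemma aux_rho_ge_one (n : ℕ) (hn : 3 ≤ n) :
    (n : ℝ) - 2 ≤ n * Real.cos (π / n) := by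
  have hpi := Real.pi_lt_d2
  have hpi' := Real.pi_gt_d2
  have hn0 : (0:ℝ) < n := by positivity
  have hn3 : (3:ℝ) ≤ n := by exact_mod_cast hn
  have h2 : 1 - (π / n) ^ 2 / 2 ≤ Real.cos (π / n) := Real.one_sub_sq_div_two_le_cos
  have h3 : (π / n) ^ 2 ≤ 2 * (2 / n) := by
    rw [div_pow, show (2:ℝ) * (2 / (n:ℝ)) = 4 / n by ring, div_le_div_iff₀ (by positivity) hn0]
    have hπ2 : π ^ 2 ≤ 9.9225 := by nlinarith
    nlinarith [mul_le_mul_of_nonneg_right hn3 hn0.le]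
  have h4 : 1 - 2 / n ≤ Real.cos (π / n) := by linarith
  have := mul_le_mul_of_nonneg_left h4 hn0.le
  calc (n:ℝ) - 2 = n * (1 - 2/n) := by field_simp
  _ ≤ n * Real.cos (π / n) := this
open scoped RealInnerProductSpace

section InnerGeom
variable {E : Type*} [NormedAddCommGroup E] [InnerProductSpace ℝ E]

lemma arccos_inner_triangle (a b c : E) (ha : ‖a‖ = 1) (hb : ‖b‖ = 1) (hc : ‖c‖ = 1) :
    Real.arccos ⟪a, c⟫ ≤ Real.arccos ⟪a, b⟫ + Real.arccos ⟪b, c⟫ := by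
  have h1 : |⟪a, b⟫| ≤ 1 := by
    have := abs_real_inner_le_norm a b; rwa [ha, hb, mul_one] at this
  have h2 : |⟪b, c⟫| ≤ 1 := by
    have := abs_real_inner_le_norm b c; rwa [hb, hc, mul_one] at this
  set t1 := ⟪a, b⟫ with ht1
  set t2 := ⟪b, c⟫ with ht2
  set t3 := ⟪a, c⟫ with ht3
  have hbb : ⟪b, b⟫ = 1 := by
    rw [real_inner_self_eq_norm_sq, hb]; norm_num
  have haa : ⟪a, a⟫ = 1 := by
    rw [real_inner_self_eq_norm_sq, ha]; norm_num
  have hcc : ⟪c, c⟫ = 1 := by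
    rw [real_inner_self_eq_norm_sq, hc]; norm_num
  have expand : ∀ (u w : E) (r1 r2 : ℝ), ⟪u - r1 • b, w - r2 • b⟫
      = ⟪u, w⟫ - r2 * ⟪u, b⟫ - r1 * ⟪b, w⟫ + r1 * r2 * ⟪b, b⟫ := by
    intro u w r1 r2
    simp only [inner_sub_left, inner_sub_right, real_inner_smul_left, real_inner_smul_right]
    ring
  have hba : ⟪b, a⟫ = t1 := by rw [ht1, real_inner_comm]
  have hcb : ⟪c, b⟫ = t2 := by rw [ht2, real_inner_comm]
  set p := a - t1 • b with hp
  set q := c - t2 • b with hq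
  have hpq : ⟪p, q⟫ = t3 - t1 * t2 := by
    rw [hp, hq, expand, hbb, ← ht1, ← ht2, ← ht3]
    ring
  have hpp : ‖p‖ ^ 2 = 1 - t1 ^ 2 := by
    rw [← real_inner_self_eq_norm_sq, hp, expand, haa, hbb, hba]
    ring
  have hqq : ‖q‖ ^ 2 = 1 - t2 ^ 2 := by
    rw [← real_inner_self_eq_norm_sq, hq, expand, hcc, hbb, hcb, ← ht2]
    ring
  have hnp : ‖p‖ = Real.sqrt (1 - t1 ^ 2) := by
    rw [← hpp, Real.sqrt_sq (norm_nonneg p)]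
  have hnq : ‖q‖ = Real.sqrt (1 - t2 ^ 2) := by
    rw [← hqq, Real.sqrt_sq (norm_nonneg q)]
  have hcs : -(‖p‖ * ‖q‖) ≤ ⟪p, q⟫ := by
    have := abs_real_inner_le_norm p q
    have h' := neg_abs_le ⟪p, q⟫
    linarith
  have key : t1 * t2 - Real.sqrt (1 - t1 ^ 2) * Real.sqrt (1 - t2 ^ 2) ≤ t3 := by
    rw [hpq] at hcs
    rw [hnp, hnq] at hcs
    linarith
  set A := Real.arccos t1 with hA
  set B := Real.arccos t2 with hB
  have hcosAB : Real.cos (A + B) = t1 * t2 - Real.sqrt (1 - t1 ^ 2) * Real.sqrt (1 - t2 ^ 2) := by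
    rw [Real.cos_add, hA, hB, Real.cos_arccos (abs_le.mp h1).1 (abs_le.mp h1).2,
      Real.cos_arccos (abs_le.mp h2).1 (abs_le.mp h2).2, Real.sin_arccos, Real.sin_arccos]
  by_cases hs : A + B ≤ π
  · have hle : Real.cos (A + B) ≤ t3 := by rw [hcosAB]; exact key
    have h3 := my_arccos_le_arccos hle
    rwa [Real.arccos_cos (add_nonneg (Real.arccos_nonneg _) (Real.arccos_nonneg _)) hs] at h3
  · have := Real.arccos_le_pi t3
    push_neg at hs
    linarith

lemma arccos_chain (y : ℕ → E) (m : ℕ) (hy : ∀ i ≤ m, ‖y i‖ = 1) :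
    Real.arccos ⟪y 0, y m⟫ ≤ ∑ i ∈ Finset.range m, Real.arccos ⟪y i, y (i + 1)⟫ := by
  induction m with
  | zero =>
    have : ⟪y 0, y 0⟫ = 1 := by
      rw [real_inner_self_eq_norm_sq, hy 0 (le_refl 0)]; norm_num
    simp [this, hy 0 (le_refl 0)]
  | succ k ih =>
    have hy' : ∀ i ≤ k, ‖y i‖ = 1 := fun i hi => hy i (hi.trans (Nat.le_succ k))
    have h1 := arccos_inner_triangle (y 0) (y k) (y (k + 1))
      (hy 0 (Nat.zero_le _)) (hy k (Nat.le_succ k)) (hy (k + 1) (le_refl _))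
    have h2 := ih hy'
    rw [Finset.sum_range_succ]
    linarith

lemma signed_cycle (n : ℕ) (hn : 3 ≤ n) (v : ℕ → E) (hv : ∀ i < n, ‖v i‖ = 1)
    (ε : ℕ → ℝ) (hε : ∀ i < n, ε i = 1 ∨ ε i = -1)
    (hprod : ∏ i ∈ Finset.range n, ε i = -1) :
    ∑ k ∈ Finset.range n,
      ε k * (if k < n - 1 then ⟪v k, v (k + 1)⟫ else ⟪v 0, v (n - 1)⟫)
      ≤ n * Real.cos (π / n) := by
  classical
  set s : ℕ → ℝ := fun i => ∏ j ∈ Finset.range i, ε j with hs_def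
  have hs : ∀ i ≤ n, s i = 1 ∨ s i = -1 := by
    intro i hi
    apply Finset.prod_induction ε (fun r => r = 1 ∨ r = -1)
    · rintro x y (rfl | rfl) (rfl | rfl) <;> norm_num
    · left; rfl
    · intro j hj
      exact hε j (lt_of_lt_of_le (Finset.mem_range.mp hj) hi)
  have hsucc : ∀ i, s (i + 1) = s i * ε i := fun i => Finset.prod_range_succ ε i
  have hs0 : s 0 = 1 := Finset.prod_range_zero ε
  have hsn : s n = -1 := hprod
  have hlast : -s (n - 1) = ε (n - 1) := by
    have h : s (n - 1) * ε (n - 1) = -1 := by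
      rw [← hsucc, show n - 1 + 1 = n by omega, hsn]
    rcases hε (n - 1) (by omega) with h1 | h1 <;> rw [h1] at h ⊢ <;> linarith
  set y : ℕ → E := fun i => if i < n then s i • v i else -v 0 with hy_def
  have hy : ∀ i ≤ n, ‖y i‖ = 1 := by
    intro i hi
    by_cases h : i < n
    · have : y i = s i • v i := if_pos h
      rw [this, norm_smul, hv i h, mul_one]
      rcases hs i hi with h1 | h1 <;> rw [h1] <;> norm_num
    · have hin : i = n := by omega
      have : y i = -v 0 := by rw [hy_def]; simp [h]
      rw [this, norm_neg]
      exact hv 0 (by omega)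
  have key : ∀ k < n, ⟪y k, y (k + 1)⟫
      = ε k * (if k < n - 1 then ⟪v k, v (k + 1)⟫ else ⟪v 0, v (n - 1)⟫) := by
    intro k hk
    by_cases hk1 : k < n - 1
    · have hk2 : k + 1 < n := by omega
      have e1 : y k = s k • v k := if_pos hk
      have e2 : y (k + 1) = s (k + 1) • v (k + 1) := if_pos hk2
      have hsk : s k * s k = 1 := by
        rcases hs k hk.le with h1 | h1 <;> rw [h1] <;> norm_num
      have hX : ∀ X : ℝ, s k * (s k * ε k * X) = ε k * X := by
        intro X
        rw [show s k * (s k * ε k * X) = (s k * s k) * (ε k * X) by ring, hsk, one_mul]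
      rw [e1, e2, real_inner_smul_left, real_inner_smul_right, if_pos hk1, hsucc]
      exact hX _
    · have hk2 : k = n - 1 := by omega
      subst hk2
      have e1 : y (n - 1) = s (n - 1) • v (n - 1) := if_pos (by omega)
      have e2 : y (n - 1 + 1) = -v 0 := by
        rw [hy_def]
        simp [show n - 1 + 1 = n by omega]
      rw [e1, e2, real_inner_smul_left, inner_neg_right, if_neg hk1,
        real_inner_comm (v (n - 1)) (v 0)]
      rw [← hlast]
      ring
  have habs : ∀ k < n, |⟪y k, y (k + 1)⟫| ≤ 1 := by
    intro k hk
    have := abs_real_inner_le_norm (y k) (y (k + 1))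
    rwa [hy k hk.le, hy (k + 1) (by omega), mul_one] at this
  have hsum : π ≤ ∑ k ∈ Finset.range n, Real.arccos ⟪y k, y (k + 1)⟫ := by
    have h0 : ⟪y 0, y n⟫ = -1 := by
      have e1 : y 0 = v 0 := by
        have : y 0 = s 0 • v 0 := if_pos (by omega)
        rw [this, hs0, one_smul]
      have e2 : y n = -v 0 := by rw [hy_def]; simp
      rw [e1, e2, inner_neg_right, real_inner_self_eq_norm_sq, hv 0 (by omega)]
      norm_num
    have := arccos_chain y n hy
    rw [h0, Real.arccos_neg_one] at this
    exact this
  have hB := aux_B n hn (fun k => Real.arccos ⟪y k, y (k + 1)⟫)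
    (fun i _ => ⟨Real.arccos_nonneg _, Real.arccos_le_pi _⟩) hsum
  calc ∑ k ∈ Finset.range n,
      ε k * (if k < n - 1 then ⟪v k, v (k + 1)⟫ else ⟪v 0, v (n - 1)⟫)
      = ∑ k ∈ Finset.range n, Real.cos (Real.arccos ⟪y k, y (k + 1)⟫) := by
        apply Finset.sum_congr rfl
        intro k hk
        have hk' := Finset.mem_range.mp hk
        rw [Real.cos_arccos (abs_le.mp (habs k hk')).1 (abs_le.mp (habs k hk')).2, key k hk']
    _ ≤ n * Real.cos (π / n) := hB

end InnerGeom

/-! ### Cycle graph bookkeeping -/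

-- We need the definitions from the problem statement here for testing; in the final
-- file they are already present.

def fe (m k : ℕ) : Fin (m + 3) := ⟨k % (m + 3), Nat.mod_lt _ (by omega)⟩

lemma fe_val (m k : ℕ) (h : k < m + 3) : (fe m k).val = k := Nat.mod_eq_of_lt h

lemma cycle_pair_iff (m : ℕ) (i j : Fin (m + 3)) :
    (i < j ∧ (cycleGraph (m + 3)).Adj i j) ↔
      (j.val = i.val + 1 ∨ (i.val = 0 ∧ j.val = m + 2)) := by
  rw [cycleGraph, SimpleGraph.fromRel_adj]
  constructor
  · rintro ⟨hij, -, h | h⟩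
    · left
      have hj := j.isLt
      have hi := i.isLt
      have : i.val < j.val := hij
      rw [Nat.mod_eq_of_lt (by omega)] at h
      exact h
    · right
      have hj := j.isLt
      have : i.val < j.val := hij
      rcases Nat.lt_or_ge (j.val + 1) (m + 3) with hc | hc
      · rw [Nat.mod_eq_of_lt hc] at h; omega
      · have hj2 : j.val = m + 2 := by omega
        rw [hj2] at h
        have h0 : (m + 2 + 1) % (m + 3) = 0 := by rw [show m + 2 + 1 = m + 3 by omega, Nat.mod_self]
        rw [h0] at h
        omega
  · rintro (h | ⟨h0, h1⟩)
    · have hj := j.isLt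
      refine ⟨?_, ?_, Or.inl ?_⟩
      · show i.val < j.val; omega
      · intro hc; rw [hc] at h; omega
      · rw [Nat.mod_eq_of_lt (by omega)]; exact h
    · refine ⟨?_, ?_, Or.inr ?_⟩
      · show i.val < j.val; omega
      · intro hc
        have : i.val = j.val := by rw [hc]
        omega
      · rw [h1, h0]
        simp
  
lemma ite_or_split {P Q : Prop} [Decidable P] [Decidable Q] (h : ¬(P ∧ Q)) (v : ℝ) :
    (if P ∨ Q then v else 0) = (if P then v else 0) + (if Q then v else 0) := by
  by_cases hP : P <;> by_cases hQ : Q <;> simp [hP, hQ] <;> tauto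

lemma edgeSum_cycle (m : ℕ) (w x : Fin (m + 3) → Fin (m + 3) → ℝ) :
    edgeSum (cycleGraph (m + 3)) w x =
      ∑ k ∈ Finset.range (m + 2), w (fe m k) (fe m (k + 1)) * x (fe m k) (fe m (k + 1))
        + w (fe m 0) (fe m (m + 2)) * x (fe m 0) (fe m (m + 2)) := by
  classical
  rw [edgeSum]
  have hsplit : ∀ i j : Fin (m + 3),
      (if i < j ∧ (cycleGraph (m + 3)).Adj i j then w i j * x i j else 0)
      = (if j.val = i.val + 1 then w i j * x i j else 0)
        + (if i.val = 0 ∧ j.val = m + 2 then w i j * x i j else 0) := by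
    intro i j
    rw [if_congr (cycle_pair_iff m i j) rfl rfl]
    apply ite_or_split
    rintro ⟨h1, h2, h3⟩
    omega
  simp_rw [hsplit, Finset.sum_add_distrib]
  congr 1
  · -- path edges
    have inner_eval : ∀ i : Fin (m + 3),
        (∑ j : Fin (m + 3), if j.val = i.val + 1 then w i j * x i j else 0)
        = if h : i.val + 1 < m + 3 then w i ⟨i.val + 1, h⟩ * x i ⟨i.val + 1, h⟩ else 0 := by
      intro i
      by_cases h : i.val + 1 < m + 3
      · rw [dif_pos h]
        rw [Finset.sum_eq_single (⟨i.val + 1, h⟩ : Fin (m + 3))]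
        · simp
        · intro j _ hj
          apply if_neg
          intro hc
          apply hj
          exact Fin.ext hc
        · intro hc
          exact absurd (Finset.mem_univ _) hc
      · rw [dif_neg h]
        apply Finset.sum_eq_zero
        intro j _
        apply if_neg
        intro hc
        have := j.isLt
        omega
    have hident : ∀ i : Fin (m + 3),
        (if h : i.val + 1 < m + 3 then w i ⟨i.val + 1, h⟩ * x i ⟨i.val + 1, h⟩ else 0)
        = (if i.val + 1 < m + 3 then
            w (fe m i.val) (fe m (i.val + 1)) * x (fe m i.val) (fe m (i.val + 1)) else 0) := by
      intro i
      by_cases h : i.val + 1 < m + 3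
      · rw [dif_pos h, if_pos h]
        have e1 : fe m i.val = i := Fin.ext (fe_val m i.val (by omega))
        have e2 : fe m (i.val + 1) = ⟨i.val + 1, h⟩ := Fin.ext (fe_val m (i.val + 1) h)
        rw [e1, e2]
      · rw [dif_neg h, if_neg h]
    simp_rw [inner_eval, hident]
    rw [Fin.sum_univ_eq_sum_range (fun k : ℕ => if k + 1 < m + 3 then
          w (fe m k) (fe m (k + 1)) * x (fe m k) (fe m (k + 1)) else 0) (m + 3)]
    rw [show m + 3 = (m + 2) + 1 by ring, Finset.sum_range_succ]
    rw [if_neg (by omega : ¬ (m + 2) + 1 < m + 3), add_zero]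
    apply Finset.sum_congr rfl
    intro k hk
    have hk' := Finset.mem_range.mp hk
    rw [if_pos (by omega : k + 1 < m + 3)]
  · -- closing edge
    have inner_eval : ∀ i : Fin (m + 3),
        (∑ j : Fin (m + 3), if i.val = 0 ∧ j.val = m + 2 then w i j * x i j else 0)
        = if i.val = 0 then w i (fe m (m + 2)) * x i (fe m (m + 2)) else 0 := by
      intro i
      by_cases hi : i.val = 0
      · rw [if_pos hi]
        rw [Finset.sum_eq_single (fe m (m + 2))]
        · rw [if_pos ⟨hi, fe_val m (m + 2) (by omega)⟩]
        · intro j _ hj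
          apply if_neg
          rintro ⟨-, hc⟩
          exact hj (Fin.ext (by rw [fe_val m (m + 2) (by omega)]; exact hc))
        · intro hc
          exact absurd (Finset.mem_univ _) hc
      · rw [if_neg hi]
        apply Finset.sum_eq_zero
        intro j _
        exact if_neg (by tauto)
    simp_rw [inner_eval]
    rw [Finset.sum_eq_single (fe m 0)]
    · rw [if_pos (fe_val m 0 (by omega))]
    · intro i _ hi
      apply if_neg
      intro hc
      exact hi (Fin.ext (by rw [fe_val m 0 (by omega)]; exact hc))
    · intro hc
      exact absurd (Finset.mem_univ _) hc

/-! ### ip and sdp machinery for the cycle -/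

/-- Edge-indexed view of a pair function on the cycle: edges `0,…,m+1` are path
edges `(k, k+1)`, edge `m+2` is the closing edge `(0, m+2)`. -/
def pcF (m : ℕ) (f : Fin (m + 3) → Fin (m + 3) → ℝ) (k : ℕ) : ℝ :=
  if k < m + 2 then f (fe m k) (fe m (k + 1)) else f (fe m 0) (fe m (m + 2))

lemma edgeSum_cycle' (m : ℕ) (w x : Fin (m + 3) → Fin (m + 3) → ℝ) :
    edgeSum (cycleGraph (m + 3)) w x =
      ∑ k ∈ Finset.range (m + 3), pcF m w k * pcF m x k := by
  rw [edgeSum_cycle]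
  conv_rhs => rw [show m + 3 = (m + 2) + 1 by ring, Finset.sum_range_succ]
  congr 1
  · apply Finset.sum_congr rfl
    intro k hk
    have hk' := Finset.mem_range.mp hk
    rw [pcF, pcF, if_pos hk', if_pos hk']
  · rw [pcF, pcF, if_neg (lt_irrefl (m + 2)), if_neg (lt_irrefl (m + 2))]

lemma prod_sq_one (g : ℕ → ℝ) (hg : ∀ i, g i = 1 ∨ g i = -1) :
    ∀ i, (∏ j ∈ Finset.range i, g j) = 1 ∨ (∏ j ∈ Finset.range i, g j) = -1 := by
  intro i
  apply Finset.prod_induction g (fun r => r = 1 ∨ r = -1)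
  · rintro x y (rfl | rfl) (rfl | rfl) <;> norm_num
  · left; rfl
  · intro j _; exact hg j

lemma telescope_prod (g : ℕ → ℝ) (hg : ∀ i, g i * g i = 1) :
    ∀ M, ∏ k ∈ Finset.range M, (g k * g (k + 1)) = g 0 * g M := by
  intro M
  induction M with
  | zero => simpa using (hg 0).symm
  | succ K ih =>
    rw [Finset.prod_range_succ, ih]
    linear_combination (g 0 * g (K + 1)) * hg K

/-- ipVal is at least the value of any admissible sign pattern. -/
lemma ipVal_ge (m : ℕ) (w : Fin (m + 3) → Fin (m + 3) → ℝ) (x : Fin (m + 3) → ℝ)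
    (hx : ∀ i, x i = 1 ∨ x i = -1) :
    edgeSum (cycleGraph (m + 3)) w (fun i j => x i * x j) ≤ ipVal (cycleGraph (m + 3)) w := by
  apply le_csSup
  · -- bounded above
    refine ⟨∑ k ∈ Finset.range (m + 3), |pcF m w k|, ?_⟩
    rintro t ⟨y, hy, rfl⟩
    rw [edgeSum_cycle']
    apply Finset.sum_le_sum
    intro k _
    have habs : |pcF m (fun i j => y i * y j) k| = 1 := by
      rw [pcF]
      split_ifs <;>
        · rw [abs_mul]
          rcases hy (fe m _) with h1 | h1 <;> rcases hy (fe m _) with h2 | h2 <;>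
            rw [h1, h2] <;> norm_num
    calc pcF m w k * pcF m (fun i j => y i * y j) k
        ≤ |pcF m w k * pcF m (fun i j => y i * y j) k| := le_abs_self _
      _ = |pcF m w k| := by rw [abs_mul, habs, mul_one]
  · exact ⟨x, hx, rfl⟩

lemma ipVal_le (m : ℕ) (w : Fin (m + 3) → Fin (m + 3) → ℝ) (B : ℝ) (hB : 0 ≤ B)
    (h : ∀ x : Fin (m + 3) → ℝ, (∀ i, x i = 1 ∨ x i = -1) →
      edgeSum (cycleGraph (m + 3)) w (fun i j => x i * x j) ≤ B) :
    ipVal (cycleGraph (m + 3)) w ≤ B := by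
  apply Real.sSup_le _ hB
  rintro t ⟨x, hx, rfl⟩
  exact h x hx

lemma sdpVal_ge (m : ℕ) (w : Fin (m + 3) → Fin (m + 3) → ℝ)
    (u : Fin (m + 3) → EuclideanSpace ℝ (Fin (m + 3))) (hu : ∀ i, ‖u i‖ = 1) :
    edgeSum (cycleGraph (m + 3)) w (fun i j => (inner ℝ (u i) (u j) : ℝ))
      ≤ sdpVal (cycleGraph (m + 3)) w := by
  apply le_csSup
  · refine ⟨∑ k ∈ Finset.range (m + 3), |pcF m w k|, ?_⟩
    rintro t ⟨v, hv, rfl⟩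
    rw [edgeSum_cycle']
    apply Finset.sum_le_sum
    intro k _
    have habs : |pcF m (fun i j => (inner ℝ (v i) (v j) : ℝ)) k| ≤ 1 := by
      rw [pcF]
      split_ifs with h
      · have := abs_real_inner_le_norm (v (fe m k)) (v (fe m (k + 1)))
        rw [hv, hv, mul_one] at this
        exact this
      · have := abs_real_inner_le_norm (v (fe m 0)) (v (fe m (m + 2)))
        rw [hv, hv, mul_one] at this
        exact this
    calc pcF m w k * pcF m (fun i j => (inner ℝ (v i) (v j) : ℝ)) k
        ≤ |pcF m w k * pcF m (fun i j => (inner ℝ (v i) (v j) : ℝ)) k| := le_abs_self _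
      _ = |pcF m w k| * |pcF m (fun i j => (inner ℝ (v i) (v j) : ℝ)) k| := abs_mul _ _
      _ ≤ |pcF m w k| * 1 := by
          apply mul_le_mul_of_nonneg_left habs (abs_nonneg _)
      _ = |pcF m w k| := mul_one _
  · exact ⟨u, hu, rfl⟩

lemma sdpVal_le (m : ℕ) (w : Fin (m + 3) → Fin (m + 3) → ℝ) (B : ℝ) (hB : 0 ≤ B)
    (h : ∀ u : Fin (m + 3) → EuclideanSpace ℝ (Fin (m + 3)), (∀ i, ‖u i‖ = 1) →
      edgeSum (cycleGraph (m + 3)) w (fun i j => (inner ℝ (u i) (u j) : ℝ)) ≤ B) :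
    sdpVal (cycleGraph (m + 3)) w ≤ B := by
  apply Real.sSup_le _ hB
  rintro t ⟨u, hu, rfl⟩
  exact h u hu

/-- Realizing an even sign pattern on the edges of the cycle. -/
lemma ipVal_ge_pattern (m : ℕ) (w : Fin (m + 3) → Fin (m + 3) → ℝ) (ε : ℕ → ℝ)
    (hε : ∀ k, ε k = 1 ∨ ε k = -1)
    (hprod : ∏ k ∈ Finset.range (m + 3), ε k = 1) :
    ∑ k ∈ Finset.range (m + 3), pcF m w k * ε k ≤ ipVal (cycleGraph (m + 3)) w := by
  set s : ℕ → ℝ := fun i => ∏ j ∈ Finset.range i, ε j with hs_def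
  have hs : ∀ i, s i = 1 ∨ s i = -1 := prod_sq_one ε hε
  set x : Fin (m + 3) → ℝ := fun i => s i.val with hx_def
  have hxpm : ∀ i, x i = 1 ∨ x i = -1 := fun i => hs i.val
  have hsucc : ∀ i, s (i + 1) = s i * ε i := fun i => Finset.prod_range_succ ε i
  have key : ∀ k ∈ Finset.range (m + 3), pcF m (fun i j => x i * x j) k = ε k := by
    intro k hk
    have hk' := Finset.mem_range.mp hk
    rw [pcF]
    by_cases h : k < m + 2
    · rw [if_pos h]
      have e1 : x (fe m k) = s k := by rw [hx_def]; simp [fe_val m k (by omega)]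
      have e2 : x (fe m (k + 1)) = s (k + 1) := by rw [hx_def]; simp [fe_val m (k + 1) (by omega)]
      rw [e1, e2, hsucc]
      rcases hs k with h1 | h1 <;> rw [h1] <;> ring
    · rw [if_neg h]
      have hk2 : k = m + 2 := by omega
      have e1 : x (fe m 0) = s 0 := by rw [hx_def]; simp [fe_val m 0 (by omega)]
      have e2 : x (fe m (m + 2)) = s (m + 2) := by
        rw [hx_def]; simp [fe_val m (m + 2) (by omega)]
      have hs0 : s 0 = 1 := Finset.prod_range_zero ε
      have hlast : s (m + 2) = ε (m + 2) := by
        have h1 : s (m + 2) * ε (m + 2) = 1 := by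
          rw [← hsucc]; exact hprod
        rcases hε (m + 2) with h2 | h2 <;> rw [h2] at h1 ⊢ <;> linarith
      rw [e1, e2, hs0, hlast, one_mul, hk2]
  have := ipVal_ge m w x hxpm
  rw [edgeSum_cycle'] at this
  calc ∑ k ∈ Finset.range (m + 3), pcF m w k * ε k
      = ∑ k ∈ Finset.range (m + 3), pcF m w k * pcF m (fun i j => x i * x j) k := by
        apply Finset.sum_congr rfl
        intro k hk
        rw [key k hk]
    _ ≤ ipVal (cycleGraph (m + 3)) w := this

/-! ### The main upper bound: `sdp ≤ ρ · ip` for every weight function -/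

lemma main_bound (m : ℕ) (w : Fin (m + 3) → Fin (m + 3) → ℝ) :
    0 ≤ ipVal (cycleGraph (m + 3)) w ∧
      sdpVal (cycleGraph (m + 3)) w ≤
        (((m : ℝ) + 3) * Real.cos (π / (m + 3)) / ((m : ℝ) + 1)) *
          ipVal (cycleGraph (m + 3)) w := by
  classical
  set c : ℝ := ((m : ℝ) + 3) * Real.cos (π / (m + 3)) with hc_def
  have hc_ge : (m : ℝ) + 1 ≤ c := by
    have := aux_rho_ge_one (m + 3) (by omega)
    rw [hc_def]
    push_cast at this ⊢
    linarith
  have hden : (0 : ℝ) < (m : ℝ) + 1 := by positivity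
  have hc_pos : 0 < c := lt_of_lt_of_le hden hc_ge
  set ρ : ℝ := c / ((m : ℝ) + 1) with hρ_def
  have hρ1 : 1 ≤ ρ := by
    rw [hρ_def, le_div_iff₀ hden, one_mul]; exact hc_ge
  have hρ0 : 0 ≤ ρ := le_trans zero_le_one hρ1
  set pw : ℕ → ℝ := pcF m w with hpw_def
  set a : ℕ → ℝ := fun k => |pw k| with ha_def
  have ha0 : ∀ k, 0 ≤ a k := fun k => abs_nonneg _
  set ε₀ : ℕ → ℝ := fun k => if pw k < 0 then -1 else 1 with hε₀_def
  have hε₀pm : ∀ k, ε₀ k = 1 ∨ ε₀ k = -1 := by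
    intro k; simp only [hε₀_def]; split_ifs <;> simp
  have hwa : ∀ k, pw k * ε₀ k = a k := by
    intro k
    simp only [hε₀_def, ha_def]
    by_cases h : pw k < 0
    · rw [if_pos h, abs_of_neg h]; ring
    · rw [if_neg h, abs_of_nonneg (not_lt.mp h), mul_one]
  have hwa' : ∀ k, pw k = ε₀ k * a k := by
    intro k
    have h1 := hwa k
    rcases hε₀pm k with h | h <;> rw [h] at h1 ⊢ <;> linarith
  set A : ℝ := ∑ k ∈ Finset.range (m + 3), a k with hA_def
  have hA0 : 0 ≤ A := Finset.sum_nonneg fun k _ => ha0 k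
  -- bound on the inner products along edges
  have hpc_le : ∀ (u : Fin (m + 3) → EuclideanSpace ℝ (Fin (m + 3))), (∀ i, ‖u i‖ = 1) →
      ∀ k, |pcF m (fun i j => (inner ℝ (u i) (u j) : ℝ)) k| ≤ 1 := by
    intro u hu k
    rw [pcF]
    split_ifs with h
    · have := abs_real_inner_le_norm (u (fe m k)) (u (fe m (k + 1)))
      rw [hu, hu, mul_one] at this; exact this
    · have := abs_real_inner_le_norm (u (fe m 0)) (u (fe m (m + 2)))
      rw [hu, hu, mul_one] at this; exact this
  rcases prod_sq_one ε₀ hε₀pm (m + 3) with hP | hP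
  · -- even case
    have hip_ge : A ≤ ipVal (cycleGraph (m + 3)) w := by
      have h1 := ipVal_ge_pattern m w ε₀ hε₀pm hP
      calc A = ∑ k ∈ Finset.range (m + 3), pw k * ε₀ k := by
              rw [hA_def]; exact (Finset.sum_congr rfl fun k _ => (hwa k)).symm
        _ ≤ _ := h1
    have hip0 : 0 ≤ ipVal (cycleGraph (m + 3)) w := le_trans hA0 hip_ge
    refine ⟨hip0, ?_⟩
    apply sdpVal_le m w _ (mul_nonneg hρ0 hip0)
    intro u hu
    rw [edgeSum_cycle']
    calc ∑ k ∈ Finset.range (m + 3), pcF m w k * pcF m (fun i j => (inner ℝ (u i) (u j) : ℝ)) k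
        ≤ A := by
          rw [hA_def]
          apply Finset.sum_le_sum
          intro k _
          calc pcF m w k * pcF m (fun i j => (inner ℝ (u i) (u j) : ℝ)) k
              ≤ |pcF m w k * pcF m (fun i j => (inner ℝ (u i) (u j) : ℝ)) k| := le_abs_self _
            _ = |pw k| * |pcF m (fun i j => (inner ℝ (u i) (u j) : ℝ)) k| := by
                rw [abs_mul, hpw_def]
            _ ≤ |pw k| * 1 := mul_le_mul_of_nonneg_left (hpc_le u hu k) (abs_nonneg _)
            _ = a k := by rw [mul_one, ha_def]
      _ ≤ 1 * ipVal (cycleGraph (m + 3)) w := by rw [one_mul]; exact hip_ge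
      _ ≤ ρ * ipVal (cycleGraph (m + 3)) w := by
          apply mul_le_mul_of_nonneg_right hρ1 hip0
  · -- odd case
    obtain ⟨e, he_mem, he_min⟩ :=
      Finset.exists_min_image (Finset.range (m + 3)) a ⟨0, Finset.mem_range.mpr (by omega)⟩
    have hAe : ((m : ℝ) + 3) * a e ≤ A := by
      have h1 : ∀ k ∈ Finset.range (m + 3), a e ≤ a k := fun k hk => he_min k hk
      have h2 := Finset.card_nsmul_le_sum (Finset.range (m + 3)) a (a e) h1
      rw [Finset.card_range, nsmul_eq_mul] at h2
      push_cast at h2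
      linarith
    set ε' : ℕ → ℝ := Function.update ε₀ e (-ε₀ e) with hε'_def
    have hε'pm : ∀ k, ε' k = 1 ∨ ε' k = -1 := by
      intro k
      rw [hε'_def]
      by_cases h : k = e
      · subst h
        simp only [Function.update_self]
        rcases hε₀pm k with h1 | h1 <;> rw [h1] <;> norm_num
      · rw [Function.update_of_ne h]
        exact hε₀pm k
    have hε'prod : ∏ k ∈ Finset.range (m + 3), ε' k = 1 := by
      rw [hε'_def, Finset.prod_update_of_mem he_mem, Finset.sdiff_singleton_eq_erase]
      have h1 : ε₀ e * ∏ k ∈ (Finset.range (m + 3)).erase e, ε₀ k = -1 := by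
        rw [Finset.mul_prod_erase _ _ he_mem]; exact hP
      have h2 : ε₀ e * ε₀ e = 1 := by
        rcases hε₀pm e with h | h <;> rw [h] <;> norm_num
      calc -ε₀ e * ∏ k ∈ (Finset.range (m + 3)).erase e, ε₀ k
          = -(ε₀ e * ∏ k ∈ (Finset.range (m + 3)).erase e, ε₀ k) := by ring
        _ = 1 := by rw [h1]; norm_num
    have hsum' : ∑ k ∈ Finset.range (m + 3), pw k * ε' k = A - 2 * a e := by
      rw [← Finset.sum_erase_add _ _ he_mem]
      have h1 : ∀ k ∈ (Finset.range (m + 3)).erase e, pw k * ε' k = a k := by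
        intro k hk
        have hne := Finset.ne_of_mem_erase hk
        rw [hε'_def, Function.update_of_ne hne]
        exact hwa k
      rw [Finset.sum_congr rfl h1]
      have h2 : pw e * ε' e = -a e := by
        rw [hε'_def, Function.update_self]
        have := hwa e
        linarith [hwa e]
      rw [h2]
      have h3 : A = (∑ k ∈ (Finset.range (m + 3)).erase e, a k) + a e := by
        rw [hA_def, ← Finset.sum_erase_add _ _ he_mem]
      rw [h3]; ring
    have hip_ge : A - 2 * a e ≤ ipVal (cycleGraph (m + 3)) w := by
      rw [← hsum']
      exact ipVal_ge_pattern m w ε' hε'pm hε'prod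
    have hip0 : 0 ≤ ipVal (cycleGraph (m + 3)) w := by
      have : 0 ≤ A - 2 * a e := by nlinarith [ha0 e]
      linarith
    refine ⟨hip0, ?_⟩
    apply sdpVal_le m w _ (mul_nonneg hρ0 hip0)
    intro u hu
    rw [edgeSum_cycle']
    set pc : ℕ → ℝ := pcF m (fun i j => (inner ℝ (u i) (u j) : ℝ)) with hpc_def
    -- the key geometric inequality
    have hkey : ∑ k ∈ Finset.range (m + 3), ε₀ k * pc k ≤ ((m : ℝ) + 3) * Real.cos (π / (m + 3)) := by
      have hv : ∀ i < m + 3, ‖u (fe m i)‖ = 1 := fun i _ => hu (fe m i)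
      have := signed_cycle (m + 3) (by omega) (fun i => u (fe m i)) hv ε₀
        (fun i _ => hε₀pm i) hP
      simp only [show m + 3 - 1 = m + 2 from rfl] at this
      calc ∑ k ∈ Finset.range (m + 3), ε₀ k * pc k
          = ∑ k ∈ Finset.range (m + 3), ε₀ k *
              (if k < m + 2 then (inner ℝ (u (fe m k)) (u (fe m (k + 1))) : ℝ)
                else (inner ℝ (u (fe m 0)) (u (fe m (m + 2))) : ℝ)) := by
            apply Finset.sum_congr rfl
            intro k _
            rw [hpc_def, pcF]
        _ ≤ ((m : ℝ) + 3) * Real.cos (π / (m + 3)) := by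
            push_cast at this ⊢
            exact this
    have hz1 : ∀ k, ε₀ k * pc k ≤ 1 := by
      intro k
      have h1 : |ε₀ k * pc k| ≤ 1 := by
        rw [abs_mul]
        have : |ε₀ k| = 1 := by rcases hε₀pm k with h | h <;> rw [h] <;> norm_num
        rw [this, one_mul, hpc_def]
        exact hpc_le u hu k
      linarith [le_abs_self (ε₀ k * pc k), (abs_le.mp h1).2]
    calc ∑ k ∈ Finset.range (m + 3), pw k * pc k
        = ∑ k ∈ Finset.range (m + 3), ((a k - a e) * (ε₀ k * pc k) + a e * (ε₀ k * pc k)) := by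
          apply Finset.sum_congr rfl
          intro k _
          rw [hwa' k]; ring
      _ = (∑ k ∈ Finset.range (m + 3), (a k - a e) * (ε₀ k * pc k))
            + a e * ∑ k ∈ Finset.range (m + 3), ε₀ k * pc k := by
          rw [Finset.sum_add_distrib, Finset.mul_sum]
      _ ≤ (∑ k ∈ Finset.range (m + 3), (a k - a e))
            + a e * (((m : ℝ) + 3) * Real.cos (π / (m + 3))) := by
          apply add_le_add
          · apply Finset.sum_le_sum
            intro k hk
            have h1 : 0 ≤ a k - a e := by linarith [he_min k hk]
            calc (a k - a e) * (ε₀ k * pc k) ≤ (a k - a e) * 1 :=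
                  mul_le_mul_of_nonneg_left (hz1 k) h1
              _ = a k - a e := mul_one _
          · exact mul_le_mul_of_nonneg_left hkey (ha0 e)
      _ = A - ((m : ℝ) + 3) * a e + a e * c := by
          rw [Finset.sum_sub_distrib, Finset.sum_const, Finset.card_range, nsmul_eq_mul, hc_def]
          push_cast
          ring
      _ ≤ ρ * (A - 2 * a e) := by
          rw [hρ_def, div_mul_eq_mul_div, le_div_iff₀ hden]
          nlinarith [mul_nonneg (sub_nonneg.mpr hc_ge) (sub_nonneg.mpr hAe)]
      _ ≤ ρ * ipVal (cycleGraph (m + 3)) w := mul_le_mul_of_nonneg_left hip_ge hρ0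

/-! ### The optimal weight: `+1` on path edges, `-1` on the closing edge -/

def wstar (m : ℕ) : Fin (m + 3) → Fin (m + 3) → ℝ :=
  fun i j => if i = fe m 0 ∧ j = fe m (m + 2) then -1 else 1

lemma pcF_wstar (m : ℕ) (k : ℕ) :
    pcF m (wstar m) k = if k < m + 2 then 1 else -1 := by
  rw [pcF]
  simp only [wstar]
  by_cases h : k < m + 2
  · rw [if_pos h, if_pos h, if_neg]
    rintro ⟨h1, h2⟩
    by_cases hk0 : k = 0
    · subst hk0
      have := congrArg Fin.val h2
      rw [fe_val m 1 (by omega), fe_val m (m + 2) (by omega)] at this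
      omega
    · have := congrArg Fin.val h1
      rw [fe_val m k (by omega), fe_val m 0 (by omega)] at this
      omega
  · rw [if_neg h, if_neg h]
    simp

lemma prod_pcF_wstar (m : ℕ) :
    ∏ k ∈ Finset.range (m + 3), pcF m (wstar m) k = -1 := by
  have : ∀ k ∈ Finset.range (m + 3), pcF m (wstar m) k = if k < m + 2 then 1 else -1 :=
    fun k _ => pcF_wstar m k
  rw [Finset.prod_congr rfl this, show m + 3 = (m + 2) + 1 by ring, Finset.prod_range_succ,
    if_neg (lt_irrefl _)]
  rw [Finset.prod_congr rfl (fun k hk => if_pos (Finset.mem_range.mp hk)), Finset.prod_const_one]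
  norm_num

lemma sum_pcF_wstar (m : ℕ) :
    ∑ k ∈ Finset.range (m + 3), pcF m (wstar m) k = (m : ℝ) + 1 := by
  have : ∀ k ∈ Finset.range (m + 3), pcF m (wstar m) k = if k < m + 2 then 1 else -1 :=
    fun k _ => pcF_wstar m k
  rw [Finset.sum_congr rfl this, show m + 3 = (m + 2) + 1 by ring, Finset.sum_range_succ,
    if_neg (lt_irrefl _)]
  rw [Finset.sum_congr rfl (fun k hk => if_pos (Finset.mem_range.mp hk)), Finset.sum_const,
    Finset.card_range, nsmul_eq_mul]
  push_cast
  ring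

lemma ipVal_wstar (m : ℕ) :
    ipVal (cycleGraph (m + 3)) (wstar m) = (m : ℝ) + 1 := by
  apply le_antisymm
  · apply ipVal_le m _ _ (by positivity)
    intro x hx
    rw [edgeSum_cycle']
    set τ : ℕ → ℝ := fun k => pcF m (wstar m) k * pcF m (fun i j => x i * x j) k with hτ_def
    have hg : ∀ i : ℕ, x (fe m i) * x (fe m i) = 1 := by
      intro i
      rcases hx (fe m i) with h | h <;> rw [h] <;> norm_num
    have hpxpm : ∀ k, pcF m (fun i j => x i * x j) k = 1 ∨ pcF m (fun i j => x i * x j) k = -1 := by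
      intro k
      rw [pcF]
      split_ifs <;>
        · rcases hx (fe m _) with h1 | h1 <;> rcases hx (fe m _) with h2 | h2 <;>
            rw [h1, h2] <;> norm_num
    have hτpm : ∀ k, τ k = 1 ∨ τ k = -1 := by
      intro k
      rw [hτ_def]
      simp only
      rw [pcF_wstar]
      rcases hpxpm k with h | h <;> rw [h] <;> split_ifs <;> norm_num
    -- product of the x-parts is 1
    have hprodx : ∏ k ∈ Finset.range (m + 3), pcF m (fun i j => x i * x j) k = 1 := by
      have heq : ∀ k ∈ Finset.range (m + 3), pcF m (fun i j => x i * x j) k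
          = if k < m + 2 then x (fe m k) * x (fe m (k + 1)) else x (fe m 0) * x (fe m (m + 2)) := by
        intro k _; rw [pcF]
      rw [Finset.prod_congr rfl heq, show m + 3 = (m + 2) + 1 by ring, Finset.prod_range_succ,
        if_neg (lt_irrefl _)]
      rw [Finset.prod_congr rfl (fun k hk => if_pos (Finset.mem_range.mp hk))]
      rw [telescope_prod (fun i => x (fe m i)) hg (m + 2)]
      nlinarith [hg 0, hg (m + 2)]
    have hprodτ : ∏ k ∈ Finset.range (m + 3), τ k = -1 := by
      rw [hτ_def]
      rw [Finset.prod_mul_distrib, prod_pcF_wstar, hprodx]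
      norm_num
    -- some τ is -1
    have hex : ∃ j ∈ Finset.range (m + 3), τ j = -1 := by
      by_contra hc
      push_neg at hc
      have : ∏ k ∈ Finset.range (m + 3), τ k = 1 := by
        apply Finset.prod_eq_one
        intro k hk
        rcases hτpm k with h | h
        · exact h
        · exact absurd h (hc k hk)
      rw [hprodτ] at this
      norm_num at this
    obtain ⟨j, hj_mem, hj⟩ := hex
    calc ∑ k ∈ Finset.range (m + 3), τ k
        = (∑ k ∈ (Finset.range (m + 3)).erase j, τ k) + τ j := (Finset.sum_erase_add _ _ hj_mem).symm
      _ ≤ (m + 2 : ℝ) + (-1) := by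
          apply add_le_add _ (le_of_eq hj)
          calc ∑ k ∈ (Finset.range (m + 3)).erase j, τ k
              ≤ ∑ k ∈ (Finset.range (m + 3)).erase j, 1 := by
                apply Finset.sum_le_sum
                intro k _
                rcases hτpm k with h | h <;> rw [h] <;> norm_num
            _ = (m + 2 : ℝ) := by
                rw [Finset.sum_const, Finset.card_erase_of_mem hj_mem, Finset.card_range,
                  nsmul_eq_mul]
                push_cast
                ring
      _ = (m : ℝ) + 1 := by ring
  · have h1 := ipVal_ge m (wstar m) (fun _ => 1) (fun _ => Or.inl rfl)
    rw [edgeSum_cycle'] at h1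
    calc ((m : ℝ) + 1) = ∑ k ∈ Finset.range (m + 3), pcF m (wstar m) k *
          pcF m (fun i j => (fun _ : Fin (m + 3) => (1:ℝ)) i * (fun _ : Fin (m + 3) => (1:ℝ)) j) k := by
          rw [← sum_pcF_wstar m]
          apply Finset.sum_congr rfl
          intro k _
          have : pcF m (fun _ _ : Fin (m + 3) => (1:ℝ) * 1) k = 1 := by
            rw [pcF]; split_ifs <;> norm_num
          rw [show pcF m (fun i j => (fun _ : Fin (m + 3) => (1:ℝ)) i *
            (fun _ : Fin (m + 3) => (1:ℝ)) j) k = pcF m (fun _ _ : Fin (m + 3) => (1:ℝ) * 1) k from rfl]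
          rw [this, mul_one]
      _ ≤ _ := h1

lemma inner_eucl (n : ℕ) (x y : EuclideanSpace ℝ (Fin n)) :
    (inner ℝ x y : ℝ) = ∑ k, x k * y k := by
  rw [PiLp.inner_apply]
  simp [RCLike.inner_apply, starRingEnd_apply]
  exact Finset.sum_congr rfl fun _ _ => mul_comm _ _

lemma norm_eucl (n : ℕ) (x : EuclideanSpace ℝ (Fin n)) :
    ‖x‖ = Real.sqrt (∑ k, (x k)^2) := by
  rw [EuclideanSpace.norm_eq]
  congr 1
  apply Finset.sum_congr rfl
  intro k _
  rw [Real.norm_eq_abs, sq_abs]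

lemma sdpVal_wstar (m : ℕ) :
    sdpVal (cycleGraph (m + 3)) (wstar m) = ((m : ℝ) + 3) * Real.cos (π / (m + 3)) := by
  have hcos_pos : (0:ℝ) ≤ ((m : ℝ) + 3) * Real.cos (π / (m + 3)) := by
    have := aux_rho_ge_one (m + 3) (by omega)
    push_cast at this
    linarith
  apply le_antisymm
  · -- upper bound via the signed cycle inequality
    apply sdpVal_le m _ _ hcos_pos
    intro u hu
    rw [edgeSum_cycle']
    have hv : ∀ i < m + 3, ‖u (fe m i)‖ = 1 := fun i _ => hu (fe m i)
    have hεpm : ∀ i < m + 3, pcF m (wstar m) i = 1 ∨ pcF m (wstar m) i = -1 := by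
      intro i _
      rw [pcF_wstar]
      split_ifs <;> norm_num
    have hkey := signed_cycle (m + 3) (by omega) (fun i => u (fe m i)) hv
      (pcF m (wstar m)) hεpm (prod_pcF_wstar m)
    simp only [show m + 3 - 1 = m + 2 from rfl] at hkey
    calc ∑ k ∈ Finset.range (m + 3), pcF m (wstar m) k *
          pcF m (fun i j => (inner ℝ (u i) (u j) : ℝ)) k
        = ∑ k ∈ Finset.range (m + 3), pcF m (wstar m) k *
            (if k < m + 2 then (inner ℝ (u (fe m k)) (u (fe m (k + 1))) : ℝ)
              else (inner ℝ (u (fe m 0)) (u (fe m (m + 2))) : ℝ)) := by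
          apply Finset.sum_congr rfl
          intro k _
          simp only [pcF]
      _ ≤ ((m : ℝ) + 3) * Real.cos (π / (m + 3)) := by
          push_cast at hkey ⊢
          exact hkey
  · -- lower bound via explicit planar vectors
    set θ : ℝ := π / (m + 3) with hθ_def
    set uu : Fin (m + 3) → EuclideanSpace ℝ (Fin (m + 3)) :=
      fun j => WithLp.toLp 2 (fun k => (if k = fe m 0 then Real.cos (j.val * θ) else 0)
        + (if k = fe m 1 then Real.sin (j.val * θ) else 0)) with huu_def
    have hfe01 : fe m 0 ≠ fe m 1 := by
      intro h
      have := congrArg Fin.val h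
      rw [fe_val m 0 (by omega), fe_val m 1 (by omega)] at this
      omega
    have happ : ∀ (j : Fin (m + 3)) (k : Fin (m + 3)),
        uu j k = (if k = fe m 0 then Real.cos (j.val * θ) else 0)
          + (if k = fe m 1 then Real.sin (j.val * θ) else 0) := fun j k => rfl
    have hsq : ∀ j : Fin (m + 3), ∑ k, (uu j k)^2 = 1 := by
      intro j
      have hpt : ∀ k : Fin (m + 3), (uu j k)^2
          = (if k = fe m 0 then (Real.cos (j.val * θ))^2 else 0)
            + (if k = fe m 1 then (Real.sin (j.val * θ))^2 else 0) := by
        intro k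
        rw [happ]
        by_cases h0 : k = fe m 0
        · rw [if_pos h0, if_pos h0, if_neg (h0 ▸ hfe01), if_neg (h0 ▸ hfe01)]
          ring
        · rw [if_neg h0, if_neg h0]
          by_cases h1 : k = fe m 1
          · rw [if_pos h1, if_pos h1]; ring
          · rw [if_neg h1, if_neg h1]; ring
      rw [Finset.sum_congr rfl (fun k _ => hpt k), Finset.sum_add_distrib,
        Finset.sum_ite_eq' Finset.univ (fe m 0), Finset.sum_ite_eq' Finset.univ (fe m 1),
        if_pos (Finset.mem_univ _), if_pos (Finset.mem_univ _)]
      exact Real.cos_sq_add_sin_sq _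
    have hnorm : ∀ j, ‖uu j‖ = 1 := by
      intro j
      rw [norm_eucl, hsq j, Real.sqrt_one]
    have hinner : ∀ j1 j2 : Fin (m + 3),
        (inner ℝ (uu j1) (uu j2) : ℝ) = Real.cos ((j1.val : ℝ) * θ - (j2.val : ℝ) * θ) := by
      intro j1 j2
      rw [inner_eucl]
      have hpt : ∀ k : Fin (m + 3), uu j1 k * uu j2 k
          = (if k = fe m 0 then Real.cos (j1.val * θ) * Real.cos (j2.val * θ) else 0)
            + (if k = fe m 1 then Real.sin (j1.val * θ) * Real.sin (j2.val * θ) else 0) := by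
        intro k
        rw [happ, happ]
        by_cases h0 : k = fe m 0
        · rw [if_pos h0, if_pos h0, if_pos h0, if_neg (h0 ▸ hfe01), if_neg (h0 ▸ hfe01),
            if_neg (h0 ▸ hfe01)]
          ring
        · rw [if_neg h0, if_neg h0, if_neg h0]
          by_cases h1 : k = fe m 1
          · rw [if_pos h1, if_pos h1, if_pos h1]; ring
          · rw [if_neg h1, if_neg h1, if_neg h1]; ring
      rw [Finset.sum_congr rfl (fun k _ => hpt k), Finset.sum_add_distrib,
        Finset.sum_ite_eq' Finset.univ (fe m 0), Finset.sum_ite_eq' Finset.univ (fe m 1),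
        if_pos (Finset.mem_univ _), if_pos (Finset.mem_univ _), Real.cos_sub]
    have hedge := sdpVal_ge m (wstar m) uu hnorm
    rw [edgeSum_cycle'] at hedge
    have hval : ∀ k ∈ Finset.range (m + 3),
        pcF m (wstar m) k * pcF m (fun i j => (inner ℝ (uu i) (uu j) : ℝ)) k = Real.cos θ := by
      intro k hk
      have hk' := Finset.mem_range.mp hk
      rw [pcF_wstar, pcF]
      by_cases h : k < m + 2
      · rw [if_pos h, if_pos h, one_mul, hinner]
        rw [fe_val m k (by omega), fe_val m (k + 1) (by omega)]
        push_cast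
        rw [show ((k:ℝ)) * θ - ((k:ℝ) + 1) * θ = -θ by ring, Real.cos_neg]
      · rw [if_neg h, if_neg h, hinner]
        rw [fe_val m 0 (by omega), fe_val m (m + 2) (by omega)]
        have harg : ((0:ℕ):ℝ) * θ - ((m + 2 : ℕ):ℝ) * θ = -(π - θ) := by
          rw [hθ_def]
          push_cast
          field_simp
          ring
        rw [harg, Real.cos_neg, Real.cos_pi_sub]
        ring
    rw [Finset.sum_congr rfl hval, Finset.sum_const, Finset.card_range, nsmul_eq_mul] at hedge
    push_cast at hedge ⊢
    exact hedge

/-- `κ(C_n) = (n/(n-2))·cos(π/n)` for `n ≥ 3`. -/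
theorem kappa_cycle (n : ℕ) (hn : 3 ≤ n) :
    kappaVal (cycleGraph n) = ((n : ℝ) / ((n : ℝ) - 2)) * Real.cos (π / n) := by
  obtain ⟨m, rfl⟩ : ∃ m, n = m + 3 := ⟨n - 3, by omega⟩
  have hden : (0:ℝ) < (m:ℝ) + 1 := by positivity
  have hc_ge : (m:ℝ) + 1 ≤ ((m:ℝ) + 3) * Real.cos (π / ((m:ℝ) + 3)) := by
    have := aux_rho_ge_one (m + 3) (by omega)
    push_cast at this
    linarith
  have hρeq : ((↑(m + 3) : ℝ) / ((↑(m + 3) : ℝ) - 2)) * Real.cos (π / (↑(m + 3) : ℝ))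
      = ((m : ℝ) + 3) * Real.cos (π / ((m : ℝ) + 3)) / ((m : ℝ) + 1) := by
    push_cast
    rw [div_mul_eq_mul_div, show ((m:ℝ) + 3 - 2) = (m:ℝ) + 1 by ring]
  have hgr : IsGreatest {t | ∃ w : Fin (m + 3) → Fin (m + 3) → ℝ,
        t = sdpVal (cycleGraph (m + 3)) w / ipVal (cycleGraph (m + 3)) w}
      (((↑(m + 3) : ℝ)) / ((↑(m + 3) : ℝ) - 2) * Real.cos (π / (↑(m + 3) : ℝ))) := by
    constructor
    · refine ⟨wstar m, ?_⟩
      rw [sdpVal_wstar, ipVal_wstar, hρeq]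
    · rintro t ⟨w, rfl⟩
      obtain ⟨hip0, hsdp⟩ := main_bound m w
      rw [hρeq]
      rcases eq_or_lt_of_le hip0 with h0 | hpos
      · rw [← h0, div_zero]
        apply div_nonneg _ hden.le
        linarith
      · rw [div_le_iff₀ hpos]
        exact hsdp
  rw [kappaVal]
  exact hgr.csSup_eq
end

section
/- Let b in Z^n with sum_i b_i = 1 and let w in R^{E(K_n)} be defined by w_ij = -b_i b_j. Then sdp(K_n, w) <= (sum_i b_i^2)/2; combined with the hypermetric inequality ip(K_n, w) = (sum_i b_i^2 - 1)/2, this shows the integrality gap of any hypermetric inequality is at most (sum_i b_i^2)/(sum_i b_i^2 - 1) <= 3/2. -/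
open Finset Real
open scoped Classical Pointwise

/-- for `b ∈ ℤⁿ` with `∑ b_i = 1` and `w_ij = -b_i b_j`,
`sdp(K_n, w) ≤ (∑ b_i²)/2`; combined with `ip(K_n, w) = (∑ b_i² - 1)/2`
(the hypermetric inequality) and `∑ b_i² ≥ 3`, the integrality gap is
at most `3/2`. -/
theorem hypermetric_gap (n : ℕ) (b : Fin n → ℤ) (hb : ∑ i, b i = 1) :
    sdpVal (⊤ : SimpleGraph (Fin n)) (fun i j => -((b i : ℝ) * (b j : ℝ))) ≤
      (∑ i, (b i : ℝ) ^ 2) / 2 ∧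
    (ipVal (⊤ : SimpleGraph (Fin n)) (fun i j => -((b i : ℝ) * (b j : ℝ))) =
        ((∑ i, (b i : ℝ) ^ 2) - 1) / 2 →
      (3 : ℝ) ≤ ∑ i, (b i : ℝ) ^ 2 →
      sdpVal (⊤ : SimpleGraph (Fin n)) (fun i j => -((b i : ℝ) * (b j : ℝ))) /
          ipVal (⊤ : SimpleGraph (Fin n)) (fun i j => -((b i : ℝ) * (b j : ℝ))) ≤
        3 / 2) := by
  have hS0 : (0:ℝ) ≤ ∑ i, (b i : ℝ) ^ 2 := Finset.sum_nonneg fun i _ => sq_nonneg _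
  have key : sdpVal (⊤ : SimpleGraph (Fin n)) (fun i j => -((b i : ℝ) * (b j : ℝ))) ≤
      (∑ i, (b i : ℝ) ^ 2) / 2 := by
    apply Real.sSup_le _ (by linarith)
    rintro t ⟨u, hu, rfl⟩
    unfold edgeSum
    beta_reduce
    set g : Fin n → Fin n → ℝ := fun i j => (b i : ℝ) * (b j : ℝ) * (inner ℝ (u i) (u j) : ℝ)
      with hg
    have hsym : ∀ i j, g i j = g j i := by
      intro i j
      simp only [hg, real_inner_comm (u i) (u j)]
      ring
    have hdiag : ∀ i, g i i = (b i : ℝ) ^ 2 := by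
      intro i
      have h1 : (inner ℝ (u i) (u i) : ℝ) = 1 := by
        rw [real_inner_self_eq_norm_sq, hu i]; norm_num
      simp only [hg, h1]; ring
    set T : ℝ := ∑ i, ∑ j, if i < j then g i j else 0 with hT
    have tri : ∀ i j : Fin n, g i j =
        (if i < j then g i j else 0) + (if j < i then g i j else 0) +
        (if i = j then g i j else 0) := by
      intro i j
      rcases lt_trichotomy i j with h | h | h
      · simp [h, asymm h, h.ne]
      · simp [h, lt_irrefl]
      · simp [h, asymm h, (ne_of_lt h).symm]
    have hfull : ∑ i, ∑ j, g i j = 2 * T + ∑ i, (b i : ℝ) ^ 2 := by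
      calc ∑ i, ∑ j, g i j
          = (∑ i, ∑ j, if i < j then g i j else 0)
            + (∑ i, ∑ j, if j < i then g i j else 0)
            + (∑ i, ∑ j, if i = j then g i j else 0) := by
            rw [← Finset.sum_add_distrib, ← Finset.sum_add_distrib]
            refine Finset.sum_congr rfl fun i _ => ?_
            rw [← Finset.sum_add_distrib, ← Finset.sum_add_distrib]
            exact Finset.sum_congr rfl fun j _ => tri i j
        _ = T + T + ∑ i, (b i : ℝ) ^ 2 := by
            congr 1
            · congr 1
              rw [Finset.sum_comm]
              exact Finset.sum_congr rfl fun j _ => Finset.sum_congr rfl fun i _ => by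
                rw [hsym i j]
            · refine Finset.sum_congr rfl fun i _ => ?_
              rw [Finset.sum_ite_eq Finset.univ i (fun j => g i j)]
              simp [hdiag i]
        _ = 2 * T + ∑ i, (b i : ℝ) ^ 2 := by ring
    have hv : (0:ℝ) ≤ inner ℝ (∑ i, (b i : ℝ) • u i) (∑ i, (b i : ℝ) • u i) :=
      real_inner_self_nonneg
    have hvv : (inner ℝ (∑ i, (b i : ℝ) • u i) (∑ i, (b i : ℝ) • u i) : ℝ)
        = ∑ i, ∑ j, g i j := by
      rw [sum_inner]
      refine Finset.sum_congr rfl fun i _ => ?_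
      rw [inner_sum]
      refine Finset.sum_congr rfl fun j _ => ?_
      rw [real_inner_smul_left, real_inner_smul_right, hg]
      ring
    trans (∑ i : Fin n, ∑ j : Fin n, -(if i < j then g i j else 0))
    · apply le_of_eq
      refine Finset.sum_congr rfl fun i _ => Finset.sum_congr rfl fun j _ => ?_
      by_cases h : i < j
      · simp [h, h.ne, hg, SimpleGraph.top_adj, mul_assoc]
      · simp [h]
    simp only [Finset.sum_neg_distrib]
    rw [← hT]
    have : 0 ≤ 2 * T + ∑ i, (b i : ℝ) ^ 2 := by rw [← hfull, ← hvv]; exact hv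
    linarith
  refine ⟨key, fun hip hS3 => ?_⟩
  rw [hip, div_le_iff₀ (by linarith)]
  linarith [key]
end
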